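/- Let J ≥ 1, let F, G : ℝ^J → ℝ be bounded Lebesgue-measurable functions, let β_0 ∈ ℝ and β_1 ≠ 0, let Z_2 ⊆ ℝ^J and let Z_1 ⊆ ℝ have nonempty interior. Suppose that for every z_1 ∈ Z_1 and z_2 ∈ Z_2: ∫_ℝ F(−z_{2,1} v, …, −z_{2,J} v) φ(v − β_0 − β_1 z_1) dv = ∫_ℝ G(−z_{2,1} v, …, −z_{2,J} v) φ(v − β_0 − β_1 z_1) dv, where φ is the standard normal density. Then for every z_2 ∈ Z_2: F(−z_{2,1} v, …, −z_{2,J} v) = G(−z_{2,1} v, …, −z_{2,J} v) for Lebesgue-almost every v ∈ ℝ. In particular F and G agree almost everywhere along every line ℝ·z_2 with z_2 ∈ Z_2. -/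

import Mathlib

open MeasureTheory

/-- The standard normal density `φ(t) = (2π)^{-1/2} exp(-t²/2)`. -/
noncomputable def stdNormalPDF (t : ℝ) : ℝ :=
  (Real.sqrt (2 * Real.pi))⁻¹ * Real.exp (-t ^ 2 / 2)

open Filter FourierTransform Real

private lemma integrable_exp_lin (a : ℝ) :
    Integrable (fun v : ℝ => Real.exp (a * v - v ^ 2 / 2)) := by
  have h : ∀ v : ℝ, a * v - v ^ 2 / 2 = -(1/2) * (v - a) ^ 2 + a ^ 2 / 2 := fun v => by ring
  simp_rw [h, Real.exp_add]
  exact ((integrable_exp_neg_mul_sq (by norm_num : (0:ℝ) < 1/2)).comp_sub_right a).mul_const _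

private lemma integrable_exp_abs (a : ℝ) :
    Integrable (fun v : ℝ => Real.exp (a * |v| - v ^ 2 / 2)) := by
  refine ((integrable_exp_lin a).add (integrable_exp_lin (-a))).mono'
    ((Real.continuous_exp.comp (by continuity)).aestronglyMeasurable) ?_
  filter_upwards with v
  rw [Real.norm_eq_abs, abs_of_pos (Real.exp_pos _)]
  rcases abs_cases v with ⟨hv, _⟩ | ⟨hv, _⟩
  · rw [hv]
    exact le_add_of_nonneg_right (Real.exp_pos _).le
  · rw [hv, mul_neg, ← neg_mul]
    exact le_add_of_nonneg_left (Real.exp_pos _).le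

private def toSchwartz (f : ℝ → ℂ) (h1 : ContDiff ℝ ((⊤ : ℕ∞) : WithTop ℕ∞) f)
    (h2 : HasCompactSupport f) : SchwartzMap ℝ ℂ where
  toFun := f
  smooth' := h1
  decay' := by
    intro k n
    have hsupp : HasCompactSupport fun x : ℝ => ‖x‖ ^ k * ‖iteratedFDeriv ℝ n f x‖ :=
      HasCompactSupport.mul_left ((h2.iteratedFDeriv n).norm)
    obtain ⟨C, hC⟩ :=
      ((continuous_id.norm.pow k).mul
        (h1.continuous_iteratedFDeriv (by exact_mod_cast le_top)).norm).bounded_above_of_compact_support hsupp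
    exact ⟨C, fun x => le_trans (le_abs_self _) (hC x)⟩

private lemma core {h : ℝ → ℝ} (hm : Measurable h) {C : ℝ} (hb : ∀ v, |h v| ≤ C)
    {μ₀ δ : ℝ} (hδ : 0 < δ)
    (hint : ∀ x : ℝ, |x - μ₀| < δ → ∫ v, h v * Real.exp (x * v - v ^ 2 / 2) = 0) :
    ∀ᵐ v : ℝ ∂volume, h v = 0 := by
  have hC0 : 0 ≤ C := (abs_nonneg _).trans (hb 0)
  have hkint_gen : ∀ a : ℝ, Integrable (fun v => h v * Real.exp (a * v - v ^ 2 / 2)) :=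
    fun a => (integrable_exp_lin a).bdd_mul hm.aestronglyMeasurable
      (Filter.Eventually.of_forall fun v => by simpa using hb v)
  set k : ℝ → ℝ := fun v => h v * Real.exp (0 * v - v ^ 2 / 2) with hkdef
  have hkint : Integrable k := hkint_gen 0
  set kC : ℝ → ℂ := fun v => (k v : ℂ) with hkCdef
  have hkCm : Measurable kC :=
    Complex.measurable_ofReal.comp (hm.mul (by fun_prop))
  have hkCint : Integrable kC := hkint.ofReal
  -- norm bound
  have hnorm : ∀ (z : ℂ) (v : ℝ),
      ‖kC v * Complex.exp (z * v)‖ ≤ C * Real.exp (‖z‖ * |v| - v ^ 2 / 2) := by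
    intro z v
    rw [norm_mul, Complex.norm_exp]
    have h1 : ‖kC v‖ ≤ C * Real.exp (-(v ^ 2) / 2) := by
      rw [hkCdef]
      simp only [Complex.norm_real, Real.norm_eq_abs, hkdef]
      rw [abs_mul, abs_of_pos (Real.exp_pos _), zero_mul, zero_sub, neg_div]
      exact mul_le_mul_of_nonneg_right (hb v) (Real.exp_pos _).le
    have h2 : (z * (v : ℂ)).re ≤ ‖z‖ * |v| := by
      calc (z * (v : ℂ)).re ≤ ‖z * (v : ℂ)‖ := Complex.re_le_norm _
        _ = ‖z‖ * |v| := by rw [norm_mul, Complex.norm_real, Real.norm_eq_abs]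
    calc ‖kC v‖ * Real.exp (z * (v:ℂ)).re
        ≤ (C * Real.exp (-(v ^ 2) / 2)) * Real.exp (‖z‖ * |v|) :=
          mul_le_mul h1 (Real.exp_le_exp.2 h2) (Real.exp_pos _).le
            (mul_nonneg hC0 (Real.exp_pos _).le)
      _ = C * Real.exp (‖z‖ * |v| - v ^ 2 / 2) := by
          rw [mul_assoc, ← Real.exp_add]; ring_nf
  -- the entire function L
  set L : ℂ → ℂ := fun z => ∫ v, kC v * Complex.exp (z * v) with hLdef
  have meas : ∀ z : ℂ, AEStronglyMeasurable (fun v : ℝ => kC v * Complex.exp (z * v)) volume :=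
    fun z => (hkCm.mul (by fun_prop)).aestronglyMeasurable
  have hLdiff : Differentiable ℂ L := by
    intro z₀
    have bound_int : Integrable (fun v : ℝ => C * Real.exp ((‖z₀‖ + 2) * |v| - v ^ 2 / 2)) :=
      (integrable_exp_abs _).const_mul C
    have hFint : Integrable (fun v : ℝ => kC v * Complex.exp (z₀ * v)) := by
      refine bound_int.mono' (meas z₀) ?_
      filter_upwards with v
      refine (hnorm z₀ v).trans ?_
      refine mul_le_mul_of_nonneg_left (Real.exp_le_exp.2 ?_) hC0
      nlinarith [abs_nonneg v, norm_nonneg z₀]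
    have key := hasDerivAt_integral_of_dominated_loc_of_deriv_le
      (F := fun (z : ℂ) (v : ℝ) => kC v * Complex.exp (z * v))
      (F' := fun (z : ℂ) (v : ℝ) => kC v * (Complex.exp (z * v) * v))
      (x₀ := z₀) (bound := fun v => C * Real.exp ((‖z₀‖ + 2) * |v| - v ^ 2 / 2))
      (Metric.ball_mem_nhds z₀ one_pos) (Filter.Eventually.of_forall meas) hFint
      ((hkCm.mul (by fun_prop)).aestronglyMeasurable)
      ?_ bound_int ?_
    · exact key.2.differentiableAt
    · filter_upwards with v
      intro z hz
      have hz1 : ‖z‖ ≤ ‖z₀‖ + 1 := by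
        have := mem_ball_iff_norm.1 hz
        calc ‖z‖ = ‖z₀ + (z - z₀)‖ := by ring_nf
          _ ≤ ‖z₀‖ + ‖z - z₀‖ := norm_add_le _ _
          _ ≤ ‖z₀‖ + 1 := by linarith
      have h1 : ‖kC v * (Complex.exp (z * v) * v)‖
          = ‖kC v * Complex.exp (z * v)‖ * |v| := by
        rw [← mul_assoc, norm_mul (kC v * Complex.exp (z * ↑v)), Complex.norm_real,
          Real.norm_eq_abs]
      rw [h1]
      have habs : |v| ≤ Real.exp |v| := by
        nlinarith [Real.add_one_le_exp |v|, abs_nonneg v]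
      calc ‖kC v * Complex.exp (z * v)‖ * |v|
          ≤ (C * Real.exp (‖z‖ * |v| - v ^ 2 / 2)) * Real.exp |v| := by
            refine mul_le_mul (hnorm z v) habs (abs_nonneg v) ?_
            exact mul_nonneg hC0 (Real.exp_pos _).le
        _ ≤ C * Real.exp ((‖z₀‖ + 2) * |v| - v ^ 2 / 2) := by
            rw [mul_assoc, ← Real.exp_add]
            refine mul_le_mul_of_nonneg_left (Real.exp_le_exp.2 ?_) hC0
            nlinarith [abs_nonneg v]
    · filter_upwards with v
      intro z hz
      have hd := (((hasDerivAt_id z).mul_const ((v : ℝ) : ℂ)).cexp).const_mul (kC v)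
      simpa using hd
  -- L vanishes on a real interval
  have hL0 : ∀ x : ℝ, |x - μ₀| < δ → L ((x : ℝ) : ℂ) = 0 := by
    intro x hx
    have hptw : ∀ v : ℝ, k v * Real.exp (x * v) = h v * Real.exp (x * v - v ^ 2 / 2) := by
      intro v
      have e : (0 * v - v ^ 2 / 2) + x * v = x * v - v ^ 2 / 2 := by ring
      rw [hkdef]
      simp only
      rw [mul_assoc, ← Real.exp_add, e]
    have hreal : ∫ v, k v * Real.exp (x * v) = 0 := by
      simp_rw [hptw]
      exact hint x hx
    have hcast : L ((x : ℝ) : ℂ) = ((∫ v, k v * Real.exp (x * v) : ℝ) : ℂ) := by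
      rw [hLdef]
      simp only
      have h7 : (fun v : ℝ => kC v * Complex.exp ((x : ℂ) * v)) =
          fun v : ℝ => ((k v * Real.exp (x * v) : ℝ) : ℂ) := by
        funext v
        push_cast
        ring
      rw [h7]
      exact integral_ofReal
    rw [hcast, hreal, Complex.ofReal_zero]
  -- identity theorem: L vanishes everywhere
  have hLall : ∀ z : ℂ, L z = 0 := by
    have hA : AnalyticOnNhd ℂ L Set.univ :=
      hLdiff.differentiableOn.analyticOnNhd isOpen_univ
    have hfreq : ∃ᶠ z in nhdsWithin ((μ₀ : ℝ) : ℂ) {((μ₀ : ℝ) : ℂ)}ᶜ, L z = 0 := by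
      have hpos : ∀ n : ℕ, (0:ℝ) < δ / ((n : ℝ) + 2) := fun n => div_pos hδ (by positivity)
      have htend : Filter.Tendsto (fun n : ℕ => ((μ₀ + δ / ((n : ℝ) + 2) : ℝ) : ℂ)) Filter.atTop
          (nhdsWithin ((μ₀ : ℝ) : ℂ) {((μ₀ : ℝ) : ℂ)}ᶜ) := by
        rw [tendsto_nhdsWithin_iff]
        constructor
        · have h2 : Filter.Tendsto (fun n : ℕ => ((n : ℝ) + 2)) Filter.atTop Filter.atTop :=
            Filter.tendsto_atTop_add_const_right _ 2 tendsto_natCast_atTop_atTop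
          have h3 : Filter.Tendsto (fun n : ℕ => δ / ((n : ℝ) + 2)) Filter.atTop (nhds 0) :=
            Filter.Tendsto.div_atTop tendsto_const_nhds h2
          have h4 : Filter.Tendsto (fun n : ℕ => (μ₀ + δ / ((n : ℝ) + 2) : ℝ)) Filter.atTop
              (nhds μ₀) := by
            simpa using tendsto_const_nhds.add h3
          exact (Complex.continuous_ofReal.continuousAt.tendsto).comp h4
        · filter_upwards with n
          simp only [Set.mem_compl_iff, Set.mem_singleton_iff]
          intro hcontra
          have h5 : (μ₀ + δ / ((n : ℝ) + 2) : ℝ) = μ₀ := by exact_mod_cast hcontra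
          have := hpos n
          linarith
      refine htend.frequently (Filter.Frequently.of_forall fun n => ?_)
      apply hL0
      rw [add_sub_cancel_left, abs_of_pos (hpos n)]
      have h6 : δ / ((n : ℝ) + 2) ≤ δ / 2 := by
        apply div_le_div_of_nonneg_left hδ.le (by norm_num)
        · push_cast; linarith [Nat.cast_nonneg (α := ℝ) n]
      linarith
    have heq0 := hA.eqOn_zero_of_preconnected_of_frequently_eq_zero isPreconnected_univ
      (Set.mem_univ _) hfreq
    exact fun z => heq0 (Set.mem_univ z)
  -- Fourier transform of kC vanishes
  have hFk : ∀ w : ℝ, 𝓕 kC w = 0 := by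
    intro w
    rw [Real.fourier_real_eq_integral_exp_smul]
    have h8 : (fun v : ℝ => Complex.exp (↑(-2 * Real.pi * v * w) * Complex.I) • kC v) =
        fun v : ℝ => kC v * Complex.exp (((-2 * Real.pi * w : ℝ) * Complex.I) * v) := by
      funext v
      rw [smul_eq_mul, mul_comm]
      congr 1
      push_cast
      ring
    rw [h8]
    exact hLall _
  -- test against smooth compactly supported functions
  have htest : ∀ (g : ℝ → ℝ), ContDiff ℝ ((⊤ : ℕ∞) : WithTop ℕ∞) g → HasCompactSupport g →
      ∫ x, g x • k x = 0 := by
    intro g hg hgsupp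
    set gC : ℝ → ℂ := fun v => (g v : ℂ) with hgCdef
    have hgC : ContDiff ℝ ((⊤ : ℕ∞) : WithTop ℕ∞) gC :=
      Complex.ofRealCLM.contDiff.comp hg
    have hgCsupp : HasCompactSupport gC := by
      have := hgsupp.comp_left (g := fun r : ℝ => (r : ℂ)) (by simp)
      exact this
    set ψ : SchwartzMap ℝ ℂ := toSchwartz gC hgC hgCsupp with hψdef
    set χ : SchwartzMap ℝ ℂ := (SchwartzMap.fourierTransformCLE ℂ (SchwartzMap ℝ ℂ)).symm ψ with hχdef
    have hχ : 𝓕 ⇑χ = ⇑ψ := by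
      have h9 := (SchwartzMap.fourierTransformCLE ℂ (SchwartzMap ℝ ℂ)).apply_symm_apply ψ
      rw [← h9]; rfl
    have flip := VectorFourier.integral_fourierIntegral_smul_eq_flip
      (e := Real.fourierChar) (μ := volume) (ν := volume) (L := innerₗ ℝ)
      Real.continuous_fourierChar continuous_inner hkCint χ.integrable
    have hflipL : (innerₗ ℝ).flip = innerₗ ℝ := by
      refine LinearMap.ext fun x => LinearMap.ext fun y => ?_
      simp only [LinearMap.flip_apply]
      exact real_inner_comm x y
    rw [hflipL] at flip
    have hLHS : ∫ ξ : ℝ, (VectorFourier.fourierIntegral Real.fourierChar volume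
        (innerₗ ℝ) kC ξ) • χ ξ = 0 := by
      have : ∀ ξ : ℝ, (VectorFourier.fourierIntegral Real.fourierChar volume
          (innerₗ ℝ) kC ξ) • χ ξ = 0 := by
        intro ξ
        have h10 : VectorFourier.fourierIntegral Real.fourierChar volume (innerₗ ℝ) kC ξ
            = 𝓕 kC ξ := rfl
        rw [h10, hFk, zero_smul]
      simp_rw [this, integral_zero]
    rw [hLHS] at flip
    have hRHS : ∫ x : ℝ, kC x • (VectorFourier.fourierIntegral Real.fourierChar volume
        (innerₗ ℝ) (⇑χ) x) = ((∫ x, k x * g x : ℝ) : ℂ) := by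
      have h11 : (fun x : ℝ => kC x • (VectorFourier.fourierIntegral Real.fourierChar volume
          (innerₗ ℝ) (⇑χ) x)) = fun x : ℝ => ((k x * g x : ℝ) : ℂ) := by
        funext x
        have h12 : VectorFourier.fourierIntegral Real.fourierChar volume (innerₗ ℝ) (⇑χ) x
            = 𝓕 (⇑χ) x := rfl
        rw [h12, hχ]
        have h13 : ψ x = gC x := rfl
        rw [smul_eq_mul, h13, hgCdef, hkCdef]
        push_cast
        ring
      rw [h11]
      exact integral_ofReal
    rw [hRHS] at flip
    have h14 : ∫ x, k x * g x = 0 := by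
      exact_mod_cast flip.symm
    have h15 : ∀ x : ℝ, g x • k x = k x * g x := fun x => by
      rw [smul_eq_mul, mul_comm]
    simp_rw [h15]
    exact h14
  -- conclude
  have hk0 : ∀ᵐ v : ℝ ∂volume, k v = 0 :=
    ae_eq_zero_of_integral_contDiff_smul_eq_zero hkint.locallyIntegrable htest
  filter_upwards [hk0] with v hv
  rw [hkdef] at hv
  simp only at hv
  rcases mul_eq_zero.1 hv with h16 | h16
  · exact h16
  · exact absurd h16 (Real.exp_ne_zero _)
  


private lemma stdNormalPDF_eq (x v : ℝ) :
    stdNormalPDF (v - x) = ((Real.sqrt (2 * Real.pi))⁻¹ * Real.exp (-(x ^ 2) / 2)) *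
      Real.exp (x * v - v ^ 2 / 2) := by
  simp only [stdNormalPDF]
  rw [mul_assoc, ← Real.exp_add]
  congr 2
  ring

/-- core of Proposition 3(ii), multinomial choice: once the
index coefficients are identified, variation in the full-support Gaussian index
identifies the structural function along every ray generated by the product
characteristics `z₂ ∈ Z₂`. -/
theorem multinomial_identification_along_rays
    {J : ℕ} (hJ : 1 ≤ J)
    (F G : (Fin J → ℝ) → ℝ) (hFm : Measurable F) (hGm : Measurable G)
    (hFb : ∃ C : ℝ, ∀ g, |F g| ≤ C) (hGb : ∃ C : ℝ, ∀ g, |G g| ≤ C)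
    (β₀ β₁ : ℝ) (hβ₁ : β₁ ≠ 0)
    (Z₂ : Set (Fin J → ℝ)) (Z₁ : Set ℝ) (hZ₁ : (interior Z₁).Nonempty)
    (heq : ∀ z₁ ∈ Z₁, ∀ z₂ ∈ Z₂,
      ∫ v : ℝ, F (fun j => -z₂ j * v) * stdNormalPDF (v - β₀ - β₁ * z₁) =
        ∫ v : ℝ, G (fun j => -z₂ j * v) * stdNormalPDF (v - β₀ - β₁ * z₁)) :
    ∀ z₂ ∈ Z₂, ∀ᵐ v : ℝ ∂volume,
      F (fun j => -z₂ j * v) = G (fun j => -z₂ j * v) := by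
  obtain ⟨CF, hCF⟩ := hFb
  obtain ⟨CG, hCG⟩ := hGb
  intro z₂ hz₂
  obtain ⟨z₁₀, hz₁₀⟩ := hZ₁
  obtain ⟨ε, hε, hball⟩ := Metric.isOpen_iff.1 isOpen_interior z₁₀ hz₁₀
  have hZball : Metric.ball z₁₀ ε ⊆ Z₁ := hball.trans interior_subset
  set μ₀ : ℝ := β₀ + β₁ * z₁₀ with hμ₀def
  set δ : ℝ := |β₁| * ε with hδdef
  have hδ : 0 < δ := mul_pos (abs_pos.2 hβ₁) hε
  set h : ℝ → ℝ := fun v => F (fun j => -z₂ j * v) - G (fun j => -z₂ j * v) with hhdef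
  have hray : Measurable fun v : ℝ => (fun j => -z₂ j * v : Fin J → ℝ) :=
    measurable_pi_lambda _ (fun j => measurable_id.const_mul (-z₂ j))
  have hm : Measurable h := (hFm.comp hray).sub (hGm.comp hray)
  have hb : ∀ v, |h v| ≤ CF + CG := by
    intro v
    calc |h v| ≤ |F (fun j => -z₂ j * v)| + |G (fun j => -z₂ j * v)| := abs_sub _ _
      _ ≤ CF + CG := add_le_add (hCF _) (hCG _)
  have hint : ∀ x : ℝ, |x - μ₀| < δ → ∫ v, h v * Real.exp (x * v - v ^ 2 / 2) = 0 := by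
    intro x hx
    set z₁ : ℝ := (x - β₀) / β₁ with hz₁def
    have hz₁mem : z₁ ∈ Z₁ := by
      apply hZball
      rw [Metric.mem_ball, Real.dist_eq]
      have h1 : z₁ - z₁₀ = (x - μ₀) / β₁ := by
        rw [hz₁def, hμ₀def]
        field_simp
        ring
      rw [h1, abs_div, div_lt_iff₀ (abs_pos.2 hβ₁)]
      rw [hδdef] at hx
      linarith [hx]
    have hxeq : x = β₀ + β₁ * z₁ := by
      rw [hz₁def]
      field_simp
      ring
    have hphi_int : Integrable (fun v : ℝ => stdNormalPDF (v - x)) := by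
      have h2 : (fun v : ℝ => stdNormalPDF (v - x)) =
          fun v => ((Real.sqrt (2 * Real.pi))⁻¹ * Real.exp (-(x ^ 2) / 2)) *
            Real.exp (x * v - v ^ 2 / 2) := funext fun v => stdNormalPDF_eq x v
      rw [h2]
      exact (integrable_exp_lin x).const_mul _
    have hFint : Integrable (fun v : ℝ => F (fun j => -z₂ j * v) * stdNormalPDF (v - x)) :=
      hphi_int.bdd_mul (hFm.comp hray).aestronglyMeasurable
        (Filter.Eventually.of_forall fun v => by simpa using hCF _)
    have hGint : Integrable (fun v : ℝ => G (fun j => -z₂ j * v) * stdNormalPDF (v - x)) :=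
      hphi_int.bdd_mul (hGm.comp hray).aestronglyMeasurable
        (Filter.Eventually.of_forall fun v => by simpa using hCG _)
    have hsub : ∫ v, h v * stdNormalPDF (v - x) = 0 := by
      rw [hhdef]
      simp only [sub_mul]
      rw [integral_sub hFint hGint]
      have he := heq z₁ hz₁mem z₂ hz₂
      have h3 : ∀ v : ℝ, v - β₀ - β₁ * z₁ = v - x := fun v => by rw [hxeq]; ring
      simp_rw [h3] at he
      rw [he, sub_self]
    have hconv : ∀ v : ℝ, h v * stdNormalPDF (v - x)
        = ((Real.sqrt (2 * Real.pi))⁻¹ * Real.exp (-(x ^ 2) / 2)) *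
          (h v * Real.exp (x * v - v ^ 2 / 2)) := by
      intro v
      rw [stdNormalPDF_eq]
      ring
    simp_rw [hconv] at hsub
    rw [integral_const_mul] at hsub
    rcases mul_eq_zero.1 hsub with h4 | h4
    · exfalso
      have h5 : (0:ℝ) < (Real.sqrt (2 * Real.pi))⁻¹ * Real.exp (-(x ^ 2) / 2) := by
        apply mul_pos _ (Real.exp_pos _)
        exact inv_pos.2 (Real.sqrt_pos.2 (by positivity))
      linarith
    · exact h4
  have key := core hm hb hδ hint
  filter_upwards [key] with v hv
  exact sub_eq_zero.1 hv
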